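/- For every inductive definition Φ, the class I(Φ) (defined via iteration sets) is closed under Φ, and I(Φ) is contained in every class that is closed under Φ; that is, I(Φ) is the smallest Φ-closed class. -/

import Mathlib

/-- A class `I` (of ZF-sets) is closed under the inductive definition `Φ`
(a binary class relation on sets): whenever `Φ X x` holds and `X ⊆ I`,
then `x ∈ I`. -/
def ClosedUnder (Φ : ZFSet → ZFSet → Prop) (I : ZFSet → Prop) : Prop :=
  ∀ X x : ZFSet, Φ X x → (∀ y ∈ X, I y) → I x

/-- `Z` is an iteration set for the inductive definition `Φ`: `Z` is a set of
ordered pairs, and for every `⟨u, x⟩ ∈ Z` there exists a set `X` with `Φ X x`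
and `X ⊆ ⋃_{v ∈ u} { z : ⟨v, z⟩ ∈ Z }`. -/
def IsIterationSet (Φ : ZFSet → ZFSet → Prop) (Z : ZFSet) : Prop :=
  (∀ w ∈ Z, ∃ u x : ZFSet, w = ZFSet.pair u x) ∧
  ∀ u x : ZFSet, ZFSet.pair u x ∈ Z →
    ∃ X : ZFSet, Φ X x ∧ ∀ y ∈ X, ∃ v : ZFSet, v ∈ u ∧ ZFSet.pair v y ∈ Z

/-- The class `I(Φ)`: the class of all `x` such that `⟨u, x⟩ ∈ Z` for some set `u`
and some iteration set `Z` for `Φ`. -/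
def IClass (Φ : ZFSet → ZFSet → Prop) (x : ZFSet) : Prop :=
  ∃ u Z : ZFSet, IsIterationSet Φ Z ∧ ZFSet.pair u x ∈ Z

/-- For every inductive definition `Φ`, the class `I(Φ)` (defined via iteration
sets) is closed under `Φ`, and is contained in every class closed under `Φ`;
i.e., `I(Φ)` is the smallest `Φ`-closed class. -/
theorem IClass_smallest_closed (Φ : ZFSet → ZFSet → Prop) :
    ClosedUnder Φ (IClass Φ) ∧
    ∀ J : ZFSet → Prop, ClosedUnder Φ J → ∀ x : ZFSet, IClass Φ x → J x := by
  classical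
  have alldef : ∀ f : ZFSet → ZFSet, ZFSet.Definable₁ f := fun f =>
    Classical.allZFSetDefinable _
  constructor
  · intro X x hΦ hmem
    have hmem' : ∀ y : ZFSet, ∃ u Z : ZFSet,
        y ∈ X → IsIterationSet Φ Z ∧ ZFSet.pair u y ∈ Z := by
      intro y
      by_cases hy : y ∈ X
      · obtain ⟨u, Z, h1, h2⟩ := hmem y hy
        exact ⟨u, Z, fun _ => ⟨h1, h2⟩⟩
      · exact ⟨∅, ∅, fun h => absurd h hy⟩
    choose U W h using hmem'
    have := alldef U
    have := alldef W
    set u0 := ZFSet.image U X with hu0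
    set Zbig := (ZFSet.sUnion (ZFSet.image W X) : ZFSet) ∪ {ZFSet.pair u0 x} with hZbig
    have hsub : ∀ y ∈ X, ∀ w ∈ W y, w ∈ Zbig := by
      intro y hy w hw
      apply ZFSet.mem_union.2 (Or.inl _)
      exact ZFSet.mem_sUnion.2 ⟨W y, ZFSet.mem_image.2 ⟨y, hy, rfl⟩, hw⟩
    refine ⟨u0, Zbig, ⟨?_, ?_⟩, ?_⟩
    · intro w hw
      rcases ZFSet.mem_union.1 hw with hw | hw
      · obtain ⟨S, hS, hwS⟩ := ZFSet.mem_sUnion.1 hw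
        obtain ⟨y, hy, rfl⟩ := ZFSet.mem_image.1 hS
        exact (h y hy).1.1 w hwS
      · exact ⟨u0, x, ZFSet.mem_singleton.1 hw⟩
    · intro a b hab
      rcases ZFSet.mem_union.1 hab with hab | hab
      · obtain ⟨S, hS, hwS⟩ := ZFSet.mem_sUnion.1 hab
        obtain ⟨y, hy, rfl⟩ := ZFSet.mem_image.1 hS
        obtain ⟨X', hX'1, hX'2⟩ := (h y hy).1.2 a b hwS
        refine ⟨X', hX'1, fun z hz => ?_⟩
        obtain ⟨v, hv, hvz⟩ := hX'2 z hz
        exact ⟨v, hv, hsub y hy _ hvz⟩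
      · obtain ⟨rfl, rfl⟩ := ZFSet.pair_inj.1 (ZFSet.mem_singleton.1 hab)
        refine ⟨X, hΦ, fun y hy => ?_⟩
        exact ⟨U y, ZFSet.mem_image.2 ⟨y, hy, rfl⟩, hsub y hy _ (h y hy).2⟩
    · exact ZFSet.mem_union.2 (Or.inr (ZFSet.mem_singleton.2 rfl))
  · rintro J hJ x ⟨u, Z, hZ, hx⟩
    have key : ∀ u : ZFSet, ∀ x, ZFSet.pair u x ∈ Z → J x := by
      intro u
      induction u using ZFSet.inductionOn with
      | _ u IH =>
        intro x hx
        obtain ⟨X, hΦ, hX⟩ := hZ.2 u x hx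
        refine hJ X x hΦ fun y hy => ?_
        obtain ⟨v, hv, hvy⟩ := hX y hy
        exact IH v hv y hvy
    exact key u x hx
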